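/- If 0 → F → E → G → 0 is a short exact sequence of Banach spaces where both F and E are ℵ-injective, then the quotient G is ℵ-injective. -/

import Mathlib

open Cardinal

/-- The density character of a topological space: the least cardinality of a dense subset. -/
noncomputable def dens (X : Type) [TopologicalSpace X] : Cardinal :=
  sInf {c | ∃ s : Set X, Dense s ∧ #s = c}

/-- A Banach space `E` is `ℵ`-injective if for every Banach space `X` of density character
less than `ℵ` and every closed subspace `Y ⊆ X`, every bounded operator `t : Y → E`
extends to a bounded operator `T : X → E`. -/
def AlephInjective (E : Type) [NormedAddCommGroup E] [NormedSpace ℝ E] [CompleteSpace E]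
    (ℵ : Cardinal) : Prop :=
  ∀ (X : Type) [NormedAddCommGroup X] [NormedSpace ℝ X] [CompleteSpace X],
    dens X < ℵ → ∀ (Y : Submodule ℝ X), IsClosed (Y : Set X) →
    ∀ t : Y →L[ℝ] E, ∃ T : X →L[ℝ] E, ∀ y : Y, T y = t y

lemma dens_le' {X : Type} [TopologicalSpace X] {s : Set X} (hs : Dense s) : dens X ≤ #s :=
  csInf_le' ⟨s, hs, rfl⟩

lemma exists_dense_eq_dens (X : Type) [TopologicalSpace X] :
    ∃ s : Set X, Dense s ∧ #s = dens X :=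
  csInf_mem (s := {c | ∃ s : Set X, Dense s ∧ #s = c}) ⟨_, Set.univ, dense_univ, rfl⟩

lemma dens_subtype_lt {X : Type} [MetricSpace X] {ℵ : Cardinal}
    (hℵ : ℵ₀ < ℵ) (hX : dens X < ℵ) (p : X → Prop) : dens {x // p x} < ℵ := by
  classical
  obtain ⟨S, hS, hScard⟩ := exists_dense_eq_dens X
  by_cases hne : Nonempty {x // p x}
  · obtain ⟨y₀⟩ := hne
    let c : S × ℕ → {x // p x} := fun q =>
      if h : ∃ y : {x // p x}, dist (y : X) (q.1 : X) < 1 / (q.2 + 1) then h.choose else y₀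
    have hdense : Dense (Set.range c) := by
      rw [Metric.dense_iff]
      intro y r hr
      obtain ⟨n, hn⟩ := exists_nat_gt (2 / r)
      have hn1 : (0:ℝ) < 1 / (n + 1) := by positivity
      have h2r : 2 / (n + 1) < r := by
        rw [div_lt_iff₀ (by positivity)]
        have h1 : 2 / r < n + 1 := hn.trans (lt_add_one _)
        rw [div_lt_iff₀ hr] at h1
        linarith
      obtain ⟨s, hsb, hsS⟩ := (Metric.dense_iff.mp hS) (y : X) _ hn1
      rw [Metric.mem_ball] at hsb
      have hex : ∃ z : {x // p x}, dist (z : X) s < 1 / (n + 1) := ⟨y, by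
        rw [dist_comm] at hsb; exact hsb⟩
      refine ⟨c (⟨s, hsS⟩, n), ?_, Set.mem_range_self _⟩
      rw [Metric.mem_ball]
      have : c (⟨s, hsS⟩, n) = hex.choose := by simp only [c, dif_pos hex]
      rw [Subtype.dist_eq, this]
      calc dist (hex.choose : X) (y : X)
          ≤ dist (hex.choose : X) s + dist s (y : X) := dist_triangle _ _ _
        _ < 1 / (n + 1) + 1 / (n + 1) := by
            have h1 := hex.choose_spec
            rw [dist_comm s (y : X)] at hsb ⊢
            exact add_lt_add h1 hsb
        _ = 2 / (n + 1) := by ring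
        _ < r := h2r
    have : dens {x // p x} ≤ #(S × ℕ) :=
      (dens_le' hdense).trans Cardinal.mk_range_le
    refine this.trans_lt ?_
    rw [Cardinal.mk_prod, Cardinal.lift_id, Cardinal.lift_id, Cardinal.mk_nat]
    exact Cardinal.mul_lt_of_lt hℵ.le (hScard.trans_lt hX) hℵ
  · have : Dense (∅ : Set {x // p x}) := fun x => (hne ⟨x⟩).elim
    have h0 := dens_le' this
    exact lt_of_le_of_lt (by simpa using h0) (Cardinal.aleph0_pos.trans hℵ)

lemma mk_addClosure_le {M : Type} [AddCommGroup M] (s : Set M) :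
    #(AddSubgroup.closure s) ≤ max ℵ₀ #s := by
  classical
  set u : Set M := s ∪ (-s) with hu
  let g : List u → M := fun l => (l.map Subtype.val).sum
  have hadd : ∀ a b : List u, g (a ++ b) = g a + g b := by
    intro a b; simp [g]
  let A : AddSubgroup M :=
  { carrier := Set.range g
    add_mem' := by
      rintro a b ⟨la, rfl⟩ ⟨lb, rfl⟩
      exact ⟨la ++ lb, hadd la lb⟩
    zero_mem' := ⟨[], by simp [g]⟩
    neg_mem' := by
      rintro a ⟨l, rfl⟩
      refine ⟨l.map (fun x => ⟨-x.1, ?_⟩), ?_⟩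
      · rcases x.2 with h | h
        · exact Or.inr (by simpa using h)
        · exact Or.inl (by simpa using h)
      · show (List.map Subtype.val (l.map _)).sum = -(l.map Subtype.val).sum
        rw [List.sum_neg, List.map_map, List.map_map]
        rfl }
  have hsub : AddSubgroup.closure s ≤ A := by
    rw [AddSubgroup.closure_le]
    intro x hx
    exact ⟨[⟨x, Or.inl hx⟩], by simp [g]⟩
  calc #(AddSubgroup.closure s) ≤ #A := Cardinal.mk_le_mk_of_subset hsub
    _ ≤ #(List u) := Cardinal.mk_range_le
    _ ≤ max ℵ₀ #u := Cardinal.mk_list_le_max u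
    _ ≤ max ℵ₀ #s := by
        apply max_le (le_max_left _ _)
        have hneg : #(-s : Set M) = #s := by
          rw [← Set.image_neg_eq_neg]
          exact Cardinal.mk_image_eq neg_injective
        calc #u ≤ #s + #(-s : Set M) := Cardinal.mk_union_le _ _
          _ = #s + #s := by rw [hneg]
          _ ≤ max (max #s #s) ℵ₀ := Cardinal.add_le_max _ _
          _ ≤ max ℵ₀ #s := by simp [max_comm]

lemma dens_spanClosure_lt {E : Type} [NormedAddCommGroup E] [NormedSpace ℝ E] {ℵ : Cardinal}
    (hℵ : ℵ₀ < ℵ) (S : Set E) (hS : #S < ℵ) :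
    dens ((Submodule.span ℝ S).topologicalClosure : Submodule ℝ E) < ℵ := by
  classical
  set QS : Set E := Set.range (fun p : ℚ × S => (p.1 : ℝ) • (p.2 : E)) with hQS
  set A : AddSubgroup E := AddSubgroup.closure QS with hA
  set E₂ := (Submodule.span ℝ S).topologicalClosure with hE₂
  -- A ⊆ E₂
  have hQS_sub : QS ⊆ (E₂ : Set E) := by
    rintro x ⟨⟨q, s⟩, rfl⟩
    exact Submodule.le_topologicalClosure _
      (Submodule.smul_mem _ _ (Submodule.subset_span s.2))
  have hA_sub : (A : Set E) ⊆ (E₂ : Set E) := by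
    rw [hA]
    intro x hx
    exact AddSubgroup.closure_le (E₂.toAddSubgroup) |>.mpr hQS_sub hx
  -- A is closed under ℚ-scalar multiplication
  have hqsmul : ∀ (q : ℚ) (x : E), x ∈ A → (q : ℝ) • x ∈ A := by
    intro q x hx
    induction hx using AddSubgroup.closure_induction with
    | mem y hy =>
        obtain ⟨⟨q', s⟩, rfl⟩ := hy
        refine AddSubgroup.subset_closure ⟨(q * q', s), ?_⟩
        simp [smul_smul]
    | zero => simpa using A.zero_mem
    | add y z _ _ hy hz => rw [smul_add]; exact A.add_mem hy hz
    | neg y _ hy => rw [smul_neg]; exact A.neg_mem hy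
  -- closure of A is ℝ-submodule
  let M' : Submodule ℝ E :=
  { carrier := closure (A : Set E)
    add_mem' := fun {a b} ha hb => by
      have := (A.topologicalClosure).add_mem (by exact ha) (by exact hb)
      exact this
    zero_mem' := (A.topologicalClosure).zero_mem
    smul_mem' := by
      intro r x hx
      change x ∈ closure (A : Set E) at hx
      change r • x ∈ closure (A : Set E)
      rw [mem_closure_iff_seq_limit] at hx ⊢
      obtain ⟨a, ha, hlim⟩ := hx
      have hq : ∀ n : ℕ, ∃ q : ℚ, |r - (q : ℝ)| < 1 / (n + 1) := fun n =>
        exists_rat_near r (by positivity)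
      choose q hqn using hq
      refine ⟨fun n => (q n : ℝ) • a n, fun n => hqsmul _ _ (ha n), ?_⟩
      have hqlim : Filter.Tendsto (fun n => (q n : ℝ)) Filter.atTop (nhds r) := by
        rw [tendsto_iff_dist_tendsto_zero]
        apply squeeze_zero (fun n => dist_nonneg) (fun n => ?_)
          tendsto_one_div_add_atTop_nhds_zero_nat
        rw [Real.dist_eq, abs_sub_comm]
        exact (hqn n).le
      exact hqlim.smul hlim }
  have hspan : Submodule.span ℝ S ≤ M' := by
    rw [Submodule.span_le]
    intro s hs'
    apply subset_closure
    have : ((1 : ℚ) : ℝ) • s ∈ A := AddSubgroup.subset_closure ⟨(1, ⟨s, hs'⟩), rfl⟩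
    simpa using this
  have hE₂_sub : (E₂ : Set E) ⊆ closure (A : Set E) :=
    Submodule.topologicalClosure_minimal _ hspan isClosed_closure
  -- dense subset of the subtype
  let T : Set E₂ := {x : E₂ | (x : E) ∈ A}
  have hTdense : Dense T := by
    intro x
    have hind : Topology.IsInducing (Subtype.val : E₂ → E) := Topology.IsInducing.subtypeVal
    rw [hind.closure_eq_preimage_closure_image T, Set.mem_preimage]
    have himg : Subtype.val '' T = (A : Set E) := by
      ext y
      constructor
      · rintro ⟨z, hz, rfl⟩; exact hz
      · intro hy; exact ⟨⟨y, hA_sub hy⟩, hy, rfl⟩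
    rw [himg]
    exact hE₂_sub x.2
  have hTcard : #T ≤ max ℵ₀ #S := by
    have h1 : #T ≤ #A := Cardinal.mk_le_of_injective (f := fun x : T => (⟨(x : E₂), x.2⟩ : A))
      (by rintro ⟨⟨x, hx⟩, hx'⟩ ⟨⟨y, hy⟩, hy'⟩ h; simpa using congrArg Subtype.val h)
    have h2 : #A ≤ max ℵ₀ #QS := mk_addClosure_le QS
    have h3 : #QS ≤ ℵ₀ * #S := by
      refine Cardinal.mk_range_le.trans ?_
      rw [Cardinal.mk_prod, Cardinal.lift_id, Cardinal.lift_id, Cardinal.mk_denumerable]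
    refine h1.trans (h2.trans ?_)
    apply max_le (le_max_left _ _)
    refine h3.trans ?_
    calc ℵ₀ * #S ≤ ℵ₀ * max ℵ₀ #S :=
          mul_le_mul_right (le_max_right _ _) _
      _ = max ℵ₀ (max ℵ₀ #S) := Cardinal.mul_eq_max le_rfl (le_max_left _ _)
      _ = max ℵ₀ #S := by rw [← max_assoc, max_self]
  calc dens E₂ ≤ #T := dens_le' hTdense
    _ ≤ max ℵ₀ #S := hTcard
    _ < ℵ := max_lt hℵ hS

lemma liftQ_exists {M N : Type} [NormedAddCommGroup M] [NormedSpace ℝ M]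
    [NormedAddCommGroup N] [NormedSpace ℝ N]
    (S : Submodule ℝ M) (hS : IsClosed (S : Set M)) (f : M →L[ℝ] N)
    (hker : S ≤ LinearMap.ker (f : M →ₗ[ℝ] N)) :
    ∃ g : (M ⧸ S) →L[ℝ] N, ∀ m : M, g (Submodule.Quotient.mk m) = f m := by
  have hlin := S.liftQ (f : M →ₗ[ℝ] N) hker
  refine ⟨LinearMap.mkContinuous (S.liftQ (f : M →ₗ[ℝ] N) hker) ‖f‖ ?_, fun m => rfl⟩
  intro x
  refine le_of_forall_pos_le_add fun ε hε => ?_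
  have hε' : 0 < ε / (‖f‖ + 1) := by positivity
  obtain ⟨m, hm, hnorm⟩ := Submodule.Quotient.norm_mk_lt x hε'
  have : S.liftQ (f : M →ₗ[ℝ] N) hker x = f m := by rw [← hm]; rfl
  rw [this]
  calc ‖f m‖ ≤ ‖f‖ * ‖m‖ := f.le_opNorm m
    _ ≤ ‖f‖ * (‖x‖ + ε / (‖f‖ + 1)) := by
        exact mul_le_mul_of_nonneg_left hnorm.le (norm_nonneg f)
    _ ≤ ‖f‖ * ‖x‖ + ε := by
        rw [mul_add]
        have h1 : ‖f‖ * (ε / (‖f‖ + 1)) ≤ ε := by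
          rw [mul_div_assoc']
          rw [div_le_iff₀ (by positivity)]
          nlinarith [norm_nonneg f, hε.le]
        linarith

lemma exists_jinv {F E G : Type}
    [NormedAddCommGroup F] [NormedSpace ℝ F]
    [NormedAddCommGroup E] [NormedSpace ℝ E]
    [NormedAddCommGroup G] [NormedSpace ℝ G]
    (j : F →L[ℝ] E) (π : E →L[ℝ] G)
    (hj : ∃ c : ℝ, 0 < c ∧ ∀ x : F, c * ‖x‖ ≤ ‖j x‖)
    (hexact : LinearMap.range (j : F →ₗ[ℝ] E) = LinearMap.ker (π : E →ₗ[ℝ] G)) :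
    ∃ jinv : (LinearMap.ker (π : E →ₗ[ℝ] G) : Submodule ℝ E) →L[ℝ] F,
      ∀ z : (LinearMap.ker (π : E →ₗ[ℝ] G) : Submodule ℝ E), j (jinv z) = (z : E) := by
  obtain ⟨c, hc, hcb⟩ := hj
  have hinj : Function.Injective j := by
    intro x y hxy
    have h0 : j (x - y) = 0 := by rw [map_sub, hxy, sub_self]
    have := hcb (x - y)
    rw [h0, norm_zero] at this
    have : ‖x - y‖ ≤ 0 := by
      by_contra h
      push_neg at h
      nlinarith
    have : x - y = 0 := by
      rw [← norm_le_zero_iff]; exact this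
    exact sub_eq_zero.mp this
  let einj := LinearEquiv.ofInjective (j : F →ₗ[ℝ] E) hinj
  let ofEq := LinearEquiv.ofEq _ _ hexact.symm
  let l : (LinearMap.ker (π : E →ₗ[ℝ] G) : Submodule ℝ E) →ₗ[ℝ] F :=
    (einj.symm.toLinearMap).comp ofEq.toLinearMap
  have key : ∀ z : (LinearMap.ker (π : E →ₗ[ℝ] G) : Submodule ℝ E), j (l z) = (z : E) := by
    intro z
    have h1 : einj (einj.symm (ofEq z)) = ofEq z := einj.apply_symm_apply _
    have h2 : (einj (einj.symm (ofEq z)) : E) = j (einj.symm (ofEq z)) := rfl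
    have h3 : ((ofEq z : LinearMap.range (j : F →ₗ[ℝ] E)) : E) = (z : E) := rfl
    calc j (l z) = (einj (einj.symm (ofEq z)) : E) := h2.symm
      _ = ((ofEq z : LinearMap.range (j : F →ₗ[ℝ] E)) : E) := by rw [h1]
      _ = (z : E) := h3
  refine ⟨LinearMap.mkContinuous l c⁻¹ ?_, fun z => key z⟩
  intro z
  have hb := hcb (l z)
  rw [key z] at hb
  rw [inv_mul_eq_div, le_div_iff₀ hc]
  calc ‖l z‖ * c = c * ‖l z‖ := mul_comm _ _
    _ ≤ ‖(z : E)‖ := hb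
    _ = ‖z‖ := rfl


set_option maxHeartbeats 1000000
set_option synthInstance.maxHeartbeats 400000

theorem stmt3
    (ℵ : Cardinal) (hℵ : Cardinal.aleph0 < ℵ)
    (F E G : Type)
    [NormedAddCommGroup F] [NormedSpace ℝ F] [CompleteSpace F]
    [NormedAddCommGroup E] [NormedSpace ℝ E] [CompleteSpace E]
    [NormedAddCommGroup G] [NormedSpace ℝ G] [CompleteSpace G]
    (j : F →L[ℝ] E) (π : E →L[ℝ] G)
    (hj : ∃ c : ℝ, 0 < c ∧ ∀ x : F, c * ‖x‖ ≤ ‖j x‖)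
    (hπ : Function.Surjective π)
    (hexact : LinearMap.range (j : F →ₗ[ℝ] E) = LinearMap.ker (π : E →ₗ[ℝ] G))
    (hF : AlephInjective F ℵ) (hE : AlephInjective E ℵ) :
    AlephInjective G ℵ := by
  intro X _ _ _ hX Y hYc t
  haveI : CompleteSpace Y := hYc.completeSpace_coe
  obtain ⟨C, hC, hCpre⟩ := π.exists_preimage_norm_le hπ
  choose e hπe hne using fun g : G => hCpre g
  -- a dense subset of Y of small cardinality
  have hdY : dens Y < ℵ := dens_subtype_lt hℵ hX _
  obtain ⟨D₀, hD₀d, hD₀c⟩ := exists_dense_eq_dens Y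
  -- the subgroup K of G
  set K : AddSubgroup G := AddSubgroup.closure (⇑t '' D₀) with hK
  have hKcard : #K < ℵ := by
    refine (mk_addClosure_le _).trans_lt (max_lt hℵ ?_)
    exact Cardinal.mk_image_le.trans_lt (hD₀c ▸ hdY)
  -- lifts of elements of K and the small subspace E₂ of E
  set S : Set E := e '' K with hS
  have hScard : #S < ℵ := Cardinal.mk_image_le.trans_lt hKcard
  set E₂ : Submodule ℝ E := (Submodule.span ℝ S).topologicalClosure with hE₂
  have hE₂closed : IsClosed (E₂ : Set E) := Submodule.isClosed_topologicalClosure _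
  haveI : CompleteSpace E₂ := hE₂closed.completeSpace_coe
  have hdE₂ : dens E₂ < ℵ := dens_spanClosure_lt hℵ S hScard
  have hSE₂ : ∀ h : G, h ∈ K → e h ∈ E₂ := fun h hh =>
    Submodule.le_topologicalClosure _ (Submodule.subset_span (Set.mem_image_of_mem e hh))
  clear_value E₂
  clear hE₂ hScard hS S
  -- controlled surjectivity of π from E₂ onto the closure of K
  set π₂ : E₂ →L[ℝ] G := π.comp E₂.subtypeL with hπ₂
  let f' : NormedAddGroupHom E₂ G :=
    AddMonoidHom.mkNormedAddGroupHom π₂.toLinearMap.toAddMonoidHom ‖π₂‖ π₂.le_opNorm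
  have hsow : f'.SurjectiveOnWith K C := by
    intro h hh
    refine ⟨⟨e h, hSE₂ h hh⟩, ?_, ?_⟩
    · show π (e h) = h
      exact hπe h
    · show ‖e h‖ ≤ C * ‖h‖
      exact hne h
  have hsurjc := controlled_closure_of_complete hC zero_lt_one hsow
  -- the product space V and the pullback P
  have hdV : dens (Y × E₂) < ℵ := by
    obtain ⟨T', hT'd, hT'c⟩ := exists_dense_eq_dens E₂
    have hd : Dense (D₀ ×ˢ T') := hD₀d.prod hT'd
    refine (dens_le' hd).trans_lt ?_
    rw [Cardinal.mk_congr (Equiv.Set.prod D₀ T'), Cardinal.mk_prod,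
      Cardinal.lift_id, Cardinal.lift_id]
    exact Cardinal.mul_lt_of_lt hℵ.le (hD₀c ▸ hdY) (hT'c ▸ hdE₂)
  set δ : (Y × E₂ : Type) →L[ℝ] G :=
    t.comp (ContinuousLinearMap.fst ℝ Y E₂) -
      π₂.comp (ContinuousLinearMap.snd ℝ Y E₂) with hδ
  have hδa : ∀ p : Y × E₂, δ p = t p.1 - π (p.2 : E) := fun p => rfl
  clear_value δ
  set P : Submodule ℝ (Y × E₂) := LinearMap.ker (δ : (Y × E₂) →ₗ[ℝ] G) with hP
  have hPc : IsClosed (P : Set (Y × E₂)) := ContinuousLinearMap.isClosed_ker δ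
  haveI : CompleteSpace P := hPc.completeSpace_coe
  have hdP : dens P < ℵ := dens_subtype_lt hℵ hdV _
  -- the subspace K' of V and the extension Φ of j⁻¹
  set K' : Submodule ℝ (Y × E₂) := (⊥ : Submodule ℝ Y).prod (LinearMap.ker (π₂ : E₂ →ₗ[ℝ] G)) with hK'
  have hK'c : IsClosed (K' : Set (Y × E₂)) := by
    rw [hK', Submodule.prod_coe]
    exact IsClosed.prod (by simp [Submodule.bot_coe])
      (ContinuousLinearMap.isClosed_ker π₂)
  obtain ⟨jinv, hjinv⟩ := exists_jinv j π hj hexact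
  have hcod : ∀ k : K', (E₂.subtypeL.comp ((ContinuousLinearMap.snd ℝ Y E₂).comp K'.subtypeL)) k
      ∈ LinearMap.ker (π : E →ₗ[ℝ] G) := by
    rintro ⟨⟨y₁, b⟩, hk⟩
    rw [hK', Submodule.mem_prod] at hk
    exact hk.2
  set φ' : K' →L[ℝ] F := jinv.comp
    ((E₂.subtypeL.comp ((ContinuousLinearMap.snd ℝ Y E₂).comp K'.subtypeL)).codRestrict
      (LinearMap.ker (π : E →ₗ[ℝ] G)) hcod) with hφ'
  obtain ⟨Φ, hΦ⟩ := hF (Y × E₂) hdV K' hK'c φ'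
  -- the maps ρ and v on P
  set ρ : P →L[ℝ] Y := (ContinuousLinearMap.fst ℝ Y E₂).comp P.subtypeL with hρ
  set v : P →L[ℝ] E :=
    E₂.subtypeL.comp ((ContinuousLinearMap.snd ℝ Y E₂).comp P.subtypeL) -
      j.comp (Φ.comp P.subtypeL) with hv
  have hv_apply : ∀ p : P, v p = (((p : Y × E₂)).2 : E) - j (Φ (p : Y × E₂)) := fun p => rfl
  have hρ_apply : ∀ p : P, ρ p = (p : Y × E₂).1 := fun p => rfl
  -- ρ is surjective
  have hρsurj : Function.Surjective ρ := by
    intro y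
    have h1 : t y ∈ K.topologicalClosure := by
      have : t y ∈ closure (K : Set G) :=
        map_mem_closure t.continuous (hD₀d y)
          (fun a ha => AddSubgroup.subset_closure (Set.mem_image_of_mem _ ha))
      exact this
    obtain ⟨g, hg, -⟩ := hsurjc _ h1
    have hmem : ((y, g) : Y × E₂) ∈ P := by
      refine LinearMap.mem_ker.mpr ?_
      rw [ContinuousLinearMap.coe_coe, hδa]
      have : π (g : E) = t y := hg
      rw [this, sub_self]
    exact ⟨⟨(y, g), hmem⟩, rfl⟩
  -- the kernel of ρ is contained in the kernel of v
  have hkerle : LinearMap.ker (ρ : P →ₗ[ℝ] Y) ≤ LinearMap.ker (v : P →ₗ[ℝ] E) := by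
    intro p hp
    rw [LinearMap.mem_ker, ContinuousLinearMap.coe_coe] at hp ⊢
    have hp1 : (p : Y × E₂).1 = 0 := by rw [← hρ_apply p, hp]
    have hpδ : t (p : Y × E₂).1 - π ((p : Y × E₂).2 : E) = 0 := by
      have h2 := LinearMap.mem_ker.mp p.2
      rw [ContinuousLinearMap.coe_coe, hδa] at h2
      exact h2
    have hp2 : (p : Y × E₂).2 ∈ LinearMap.ker (π₂ : E₂ →ₗ[ℝ] G) := by
      rw [LinearMap.mem_ker]
      show π ((p : Y × E₂).2 : E) = 0
      rw [hp1] at hpδ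
      simpa using hpδ.symm
    have hmem : (p : Y × E₂) ∈ K' := by
      rw [hK', Submodule.mem_prod]
      exact ⟨by simp [hp1], hp2⟩
    have hΦp : Φ (p : Y × E₂) = φ' ⟨(p : Y × E₂), hmem⟩ := hΦ ⟨(p : Y × E₂), hmem⟩
    rw [hv_apply, hΦp, hφ']
    have : j (jinv (((E₂.subtypeL.comp ((ContinuousLinearMap.snd ℝ Y E₂).comp K'.subtypeL)).codRestrict
        (LinearMap.ker (π : E →ₗ[ℝ] G)) hcod) ⟨(p : Y × E₂), hmem⟩)) = ((p : Y × E₂).2 : E) := hjinv _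
    rw [ContinuousLinearMap.comp_apply, this, sub_self]
  -- factor v through Y via the quotient
  have hkerρc : IsClosed ((LinearMap.ker (ρ : P →ₗ[ℝ] Y) : Submodule ℝ P) : Set P) :=
    ContinuousLinearMap.isClosed_ker ρ
  obtain ⟨ρbar, hρbar⟩ := liftQ_exists (LinearMap.ker (ρ : P →ₗ[ℝ] Y)) hkerρc ρ le_rfl
  obtain ⟨vbar, hvbar⟩ := liftQ_exists (LinearMap.ker (ρ : P →ₗ[ℝ] Y)) hkerρc v hkerle
  have hker_bot : LinearMap.ker (ρbar : (P ⧸ LinearMap.ker (ρ : P →ₗ[ℝ] Y)) →ₗ[ℝ] Y) = ⊥ := by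
    rw [LinearMap.ker_eq_bot']
    intro m hm
    obtain ⟨p, rfl⟩ := Submodule.Quotient.mk_surjective _ m
    rw [ContinuousLinearMap.coe_coe, hρbar] at hm
    rw [Submodule.Quotient.mk_eq_zero]
    exact LinearMap.mem_ker.mpr hm
  have hrange_top : LinearMap.range (ρbar : (P ⧸ LinearMap.ker (ρ : P →ₗ[ℝ] Y)) →ₗ[ℝ] Y) = ⊤ := by
    rw [LinearMap.range_eq_top]
    intro y
    obtain ⟨p, hp⟩ := hρsurj y
    exact ⟨Submodule.Quotient.mk p, by rw [ContinuousLinearMap.coe_coe, hρbar, hp]⟩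
  set eQ := ContinuousLinearEquiv.ofBijective ρbar hker_bot hrange_top with heQ
  set w : Y →L[ℝ] E := vbar.comp (eQ.symm : Y →L[ℝ] _) with hw'
  have hw : ∀ p : P, w (ρ p) = v p := by
    intro p
    have h1 : eQ (Submodule.Quotient.mk p) = ρ p := by
      rw [heQ]
      show ρbar (Submodule.Quotient.mk p) = ρ p
      exact hρbar p
    have h2 : eQ.symm (ρ p) = Submodule.Quotient.mk p := by
      rw [← h1, ContinuousLinearEquiv.symm_apply_apply]
    show vbar (eQ.symm (ρ p)) = v p
    rw [h2, hvbar]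
  -- w is a lifting of t
  have hπw : ∀ y : Y, π (w y) = t y := by
    intro y
    obtain ⟨p, rfl⟩ := hρsurj y
    rw [hw p, hv_apply]
    have h1 : π (j (Φ (p : Y × E₂))) = 0 := by
      have : j (Φ (p : Y × E₂)) ∈ LinearMap.ker (π : E →ₗ[ℝ] G) := by
        rw [← hexact]
        exact LinearMap.mem_range_self _ _
      exact LinearMap.mem_ker.mp this
    have hpδ : t (p : Y × E₂).1 - π ((p : Y × E₂).2 : E) = 0 := by
      have h2 := LinearMap.mem_ker.mp p.2
      rw [ContinuousLinearMap.coe_coe, hδa] at h2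
      exact h2
    rw [map_sub, h1, sub_zero, hρ_apply]
    have : π ((p : Y × E₂).2 : E) = t (p : Y × E₂).1 := by
      have := sub_eq_zero.mp hpδ
      exact this.symm
    exact this
  -- extend w to X using injectivity of E
  obtain ⟨W, hW⟩ := hE X hX Y hYc w
  refine ⟨π.comp W, fun y => ?_⟩
  show π (W y) = t y
  rw [hW y, hπw y]
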